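/- Let m ≥ 1, let λ₁, …, λ_m ∈ ℂ be pairwise distinct, and for each s let f^s be a nonzero tempered distribution on ℝ which is a quasi associated homogeneous distribution of degree λ_s and some order k_s ∈ ℕ. Then f^1, …, f^m are linearly independent over ℂ: if c₁f^1 + ⋯ + c_m f^m = 0 with c_s ∈ ℂ, then c₁ = ⋯ = c_m = 0. -/

import Mathlib

open MeasureTheory SchwartzMap Complex Finset


section ExpPolyAux
open Polynomial
noncomputable section

/-- The operator `Q ↦ η Q + Q'`, which arises when differentiating `e^{ηt} Q(t)`. -/
def dOp (η : ℂ) (Q : Polynomial ℂ) : Polynomial ℂ := Polynomial.C η * Q + derivative Q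

lemma dOp_ne_zero {η : ℂ} (hη : η ≠ 0) {Q : Polynomial ℂ} (hQ : Q ≠ 0) : dOp η Q ≠ 0 := by
  intro h0
  have hc : (dOp η Q).coeff Q.natDegree = η * Q.leadingCoeff := by
    rw [dOp, coeff_add, coeff_C_mul, coeff_derivative,
      Polynomial.coeff_eq_zero_of_natDegree_lt (Nat.lt_succ_self _), zero_mul, add_zero,
      Polynomial.leadingCoeff]
  rw [h0] at hc
  exact mul_ne_zero hη (Polynomial.leadingCoeff_ne_zero.mpr hQ) (by simpa using hc.symm)

lemma dOp_iterate_eq_zero {η : ℂ} (hη : η ≠ 0) {Q : Polynomial ℂ} :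
    ∀ N, (dOp η)^[N] Q = 0 → Q = 0 := by
  intro N
  induction N generalizing Q with
  | zero => exact fun h => h
  | succ N ih =>
    intro h
    rw [Function.iterate_succ_apply] at h
    have := ih h
    by_contra hQ
    exact dOp_ne_zero hη hQ this

lemma hasDerivAt_term (η : ℂ) (Q : Polynomial ℂ) (t : ℝ) :
    HasDerivAt (fun u : ℝ => Complex.exp (η * u) * Q.eval (u : ℂ))
      (Complex.exp (η * t) * (dOp η Q).eval (t : ℂ)) t := by
  have hlin : HasDerivAt (fun z : ℂ => η * z) η (t : ℂ) := by
    simpa using (hasDerivAt_id (t:ℂ)).const_mul η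
  have he : HasDerivAt (fun z : ℂ => Complex.exp (η * z)) (Complex.exp (η * (t:ℂ)) * η) (t : ℂ) :=
    hlin.cexp
  have hp := Q.hasDerivAt (t : ℂ)
  have hmul := he.fun_mul hp
  have h1 : HasDerivAt (fun z : ℂ => Complex.exp (η * z) * Q.eval z)
      (Complex.exp (η * t) * (dOp η Q).eval (t : ℂ)) (t : ℂ) := by
    refine hmul.congr_deriv ?_
    simp only [dOp, Polynomial.eval_add, Polynomial.eval_mul, Polynomial.eval_C]
    ring
  exact h1.comp_ofReal

lemma step_zero {n : ℕ} (η : Fin n → ℂ) (Q : Fin n → Polynomial ℂ)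
    (h : ∀ t : ℝ, ∑ s, Complex.exp (η s * t) * (Q s).eval (t : ℂ) = 0) (t : ℝ) :
    ∑ s, Complex.exp (η s * t) * (dOp (η s) (Q s)).eval (t : ℂ) = 0 := by
  have H : HasDerivAt (fun u : ℝ => ∑ s, Complex.exp (η s * u) * (Q s).eval (u : ℂ))
      (∑ s, Complex.exp (η s * t) * (dOp (η s) (Q s)).eval (t : ℂ)) t :=
    HasDerivAt.fun_sum fun s _ => hasDerivAt_term (η s) (Q s) t
  have H0 : HasDerivAt (fun u : ℝ => ∑ s, Complex.exp (η s * u) * (Q s).eval (u : ℂ)) 0 t := by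
    have heq : (fun u : ℝ => ∑ s, Complex.exp (η s * u) * (Q s).eval (u : ℂ)) = fun _ => (0:ℂ) :=
      funext h
    rw [heq]; exact hasDerivAt_const t 0
  exact H.unique H0

lemma poly_zero_of_real_eval {P : Polynomial ℂ} (h : ∀ t : ℝ, P.eval (t : ℂ) = 0) : P = 0 := by
  apply Polynomial.eq_zero_of_infinite_isRoot
  refine Set.Infinite.mono ?_ (Set.infinite_range_of_injective Complex.ofReal_injective)
  rintro x ⟨t, rfl⟩
  exact h t

lemma expPolyIndep : ∀ (n : ℕ) (μ : Fin n → ℂ), Function.Injective μ →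
    ∀ (P : Fin n → Polynomial ℂ),
      (∀ t : ℝ, ∑ s, Complex.exp (μ s * t) * (P s).eval (t : ℂ) = 0) → ∀ s, P s = 0 := by
  intro n
  induction n with
  | zero => intro μ _ P _ s; exact s.elim0
  | succ n ih =>
    intro μ hμ P hsum
    set η : Fin (n+1) → ℂ := fun s => μ s - μ (Fin.last n) with hη_def
    have hη_inj : Function.Injective η := fun a b hab => hμ (by
      have := hab; simpa [hη_def, sub_left_inj] using this)
    have hsum' : ∀ t : ℝ, ∑ s, Complex.exp (η s * t) * (P s).eval (t : ℂ) = 0 := by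
      intro t
      have key : ∀ s : Fin (n+1), Complex.exp (η s * t) * (P s).eval (t : ℂ)
          = Complex.exp (-(μ (Fin.last n)) * t) * (Complex.exp (μ s * t) * (P s).eval (t : ℂ)) := by
        intro s
        rw [← mul_assoc, ← Complex.exp_add]
        congr 2
        simp [hη_def]; ring
      rw [Finset.sum_congr rfl fun s _ => key s, ← Finset.mul_sum, hsum t, mul_zero]
    have iter : ∀ N, ∀ t : ℝ,
        ∑ s, Complex.exp (η s * t) * ((dOp (η s))^[N] (P s)).eval (t : ℂ) = 0 := by
      intro N
      induction N with
      | zero => simpa using hsum'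
      | succ N ihN =>
        intro t
        have := step_zero η (fun s => (dOp (η s))^[N] (P s)) ihN t
        simpa [Function.iterate_succ_apply'] using this
    set N := (P (Fin.last n)).natDegree + 1 with hN
    have hη_last : η (Fin.last n) = 0 := by simp [hη_def]
    have hlast0 : (dOp (η (Fin.last n)))^[N] (P (Fin.last n)) = 0 := by
      have hD : dOp (η (Fin.last n)) = ⇑Polynomial.derivative := by
        funext Q; simp [dOp, hη_last]
      rw [hD]
      exact Polynomial.iterate_derivative_eq_zero (Nat.lt_succ_self _)
    have hred : ∀ t : ℝ, ∑ i : Fin n, Complex.exp (η i.castSucc * t) *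
        ((dOp (η i.castSucc))^[N] (P i.castSucc)).eval (t : ℂ) = 0 := by
      intro t
      have h1 := iter N t
      rw [Fin.sum_univ_castSucc] at h1
      rw [hlast0] at h1
      simpa using h1
    have hzero : ∀ i : Fin n, (dOp (η i.castSucc))^[N] (P i.castSucc) = 0 :=
      ih _ (hη_inj.comp (Fin.castSucc_injective n)) _ hred
    have hPother : ∀ i : Fin n, P i.castSucc = 0 := by
      intro i
      have hne : η i.castSucc ≠ 0 := by
        intro h0
        have : i.castSucc = Fin.last n := hη_inj (h0.trans hη_last.symm)
        exact (Fin.castSucc_lt_last i).ne this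
      exact dOp_iterate_eq_zero hne N (hzero i)
    have hPlast : P (Fin.last n) = 0 := by
      apply poly_zero_of_real_eval
      intro t
      have h1 := hsum' t
      rw [Fin.sum_univ_castSucc] at h1
      have h2 : ∀ i : Fin n, Complex.exp (η i.castSucc * t) * (P i.castSucc).eval (t : ℂ) = 0 := by
        intro i; rw [hPother i]; simp
      rw [Finset.sum_congr rfl fun i _ => h2 i] at h1
      simp only [Finset.sum_const_zero, zero_add, hη_last, zero_mul, Complex.exp_zero,
        one_mul] at h1
      exact h1
    intro s
    exact Fin.lastCases hPlast hPother s

lemma cpow_exp_eq (t : ℝ) (w : ℂ) : ((Real.exp t : ℝ) : ℂ) ^ w = Complex.exp (w * t) := by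
  rw [Complex.cpow_def_of_ne_zero (Complex.ofReal_ne_zero.mpr (Real.exp_pos t).ne')]
  rw [← Complex.ofReal_log (Real.exp_pos t).le, Real.log_exp, mul_comm]

end
end ExpPolyAux


noncomputable section

variable {E : Type*} [NormedAddCommGroup E] [NormedSpace ℝ E]

/-- The dilation operator on Schwartz functions: for `a ≠ 0`,
`dilate a φ = fun x => φ (a⁻¹ • x)`, i.e. `x ↦ φ (x / a)` (junk value `0` for `a = 0`). -/
def dilate (a : ℝ) : 𝓢(E, ℂ) →L[ℝ] 𝓢(E, ℂ) :=
  if h : a = 0 then 0 else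
    SchwartzMap.compCLM ℝ (g := fun x : E => a⁻¹ • x)
      (by convert (a⁻¹ • ContinuousLinearMap.id ℝ E).hasTemperateGrowth using 1 <;> (ext x; simp))
      ⟨1, |a|, fun x => by
        have ha : a ≠ 0 := h
        have h0 : |a| ≠ 0 := abs_ne_zero.mpr ha
        have hx : ‖a⁻¹ • x‖ = |a|⁻¹ * ‖x‖ := by
          rw [norm_smul, norm_inv, Real.norm_eq_abs]
        have key : |a| * (1 + ‖a⁻¹ • x‖) ^ 1 = |a| + ‖x‖ := by
          rw [pow_one, hx, mul_add, mul_one, ← mul_assoc, mul_inv_cancel₀ h0, one_mul]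
        calc ‖x‖ ≤ |a| + ‖x‖ := le_add_of_nonneg_left (abs_nonneg a)
          _ = |a| * (1 + ‖a⁻¹ • x‖) ^ 1 := key.symm⟩

lemma dilate_apply (a : ℝ) (ha : a ≠ 0) (φ : 𝓢(E, ℂ)) (x : E) :
    dilate a φ x = φ (a⁻¹ • x) := by
  simp [dilate, dif_neg ha]

/-- On `ℝ`, `dilate a φ` is the function `x ↦ φ (x / a)`. -/
lemma dilate_apply_real (a : ℝ) (ha : a ≠ 0) (φ : 𝓢(ℝ, ℂ)) (x : ℝ) :
    dilate a φ x = φ (x / a) := by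
  rw [dilate_apply a ha, smul_eq_mul, inv_mul_eq_div]

/-- A tempered distribution on `ℝ` is homogeneous of degree `λ` if
`⟨f, φ(·/a)⟩ = a^(λ+1) ⟨f, φ⟩` for all `a > 0` and all Schwartz `φ`. -/
def IsHomogeneous (lam : ℂ) (f : 𝓢(ℝ, ℂ) →L[ℂ] ℂ) : Prop :=
  ∀ a : ℝ, 0 < a → ∀ φ : 𝓢(ℝ, ℂ), f (dilate a φ) = (a : ℂ) ^ (lam + 1) * f φ

/-- Quasi associated homogeneous distribution of degree `λ` and order `k` on `ℝ`:
for `k = 0` a homogeneous distribution of degree `λ`; for `k ≥ 1`, there are QAHDs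
`g j` of degree `λ` and order `j` for `j < k` such that
`⟨f, φ(·/a)⟩ = a^(λ+1) ⟨f, φ⟩ + ∑_{r=1}^{k} a^(λ+1) (log a)^r ⟨g (k-r), φ⟩`. -/
inductive IsQAHD (lam : ℂ) : ℕ → (𝓢(ℝ, ℂ) →L[ℂ] ℂ) → Prop
  | base {f : 𝓢(ℝ, ℂ) →L[ℂ] ℂ} (hf : IsHomogeneous lam f) : IsQAHD lam 0 f
  | step {k : ℕ} (hk : 0 < k) {f : 𝓢(ℝ, ℂ) →L[ℂ] ℂ} (g : ℕ → (𝓢(ℝ, ℂ) →L[ℂ] ℂ))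
      (hg : ∀ j, j < k → IsQAHD lam j (g j))
      (hf : ∀ a : ℝ, 0 < a → ∀ φ : 𝓢(ℝ, ℂ),
        f (dilate a φ) = (a : ℂ) ^ (lam + 1) * f φ
          + ∑ r ∈ Finset.Icc 1 k,
              (a : ℂ) ^ (lam + 1) * (Real.log a : ℂ) ^ r * (g (k - r)) φ) :
      IsQAHD lam k f


lemma qahd_exists_poly {lam : ℂ} {k : ℕ} {f : 𝓢(ℝ, ℂ) →L[ℂ] ℂ} (h : IsQAHD lam k f)
    (φ : 𝓢(ℝ, ℂ)) :
    ∃ P : Polynomial ℂ, P.coeff 0 = f φ ∧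
      ∀ a : ℝ, 0 < a → f (dilate a φ) = (a : ℂ) ^ (lam + 1) * P.eval ((Real.log a : ℝ) : ℂ) := by
  cases h with
  | base hf =>
    exact ⟨Polynomial.C (f φ), by simp, fun a ha => by simp [hf a ha φ]⟩
  | step hk g hg hf =>
    refine ⟨Polynomial.C (f φ) + ∑ r ∈ Finset.Icc 1 k, Polynomial.C ((g (k - r)) φ)
      * Polynomial.X ^ r, ?_, ?_⟩
    · rw [Polynomial.coeff_add, Polynomial.coeff_C, if_pos rfl, Polynomial.finset_sum_coeff]
      rw [Finset.sum_eq_zero, add_zero]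
      intro r hr
      rw [Polynomial.coeff_C_mul, Polynomial.coeff_X_pow,
        if_neg (by rw [Finset.mem_Icc] at hr; omega), mul_zero]
    · intro a ha
      rw [hf a ha φ]
      simp only [Polynomial.eval_add, Polynomial.eval_finset_sum, Polynomial.eval_mul,
        Polynomial.eval_C, Polynomial.eval_pow, Polynomial.eval_X, mul_add, Finset.mul_sum]
      exact congrArg (_ + ·) (Finset.sum_congr rfl fun r _ => by ring)

/-- nonzero QAHDs with pairwise distinct degrees are linearly independent. -/
theorem stmt_2 (m : ℕ) (hm : 1 ≤ m) (lam : Fin m → ℂ) (hlam : Function.Injective lam)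
    (k : Fin m → ℕ) (f : Fin m → (𝓢(ℝ, ℂ) →L[ℂ] ℂ))
    (hne : ∀ s, f s ≠ 0) (hq : ∀ s, IsQAHD (lam s) (k s) (f s))
    (c : Fin m → ℂ) (hsum : ∑ s, c s • f s = 0) :
    ∀ s, c s = 0 := by
  intro s
  by_contra hcs
  apply hne s
  ext φ
  choose P hP0 hPd using fun s' => qahd_exists_poly (hq s') φ
  have key : ∀ t : ℝ, ∑ s', Complex.exp ((lam s' + 1) * t) * ((c s') • P s').eval (t : ℂ) = 0 := by
    intro t
    have ha : (0:ℝ) < Real.exp t := Real.exp_pos t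
    have h1 : (∑ s', c s' • f s') (dilate (Real.exp t) φ) = 0 := by
      rw [hsum]; simp
    rw [ContinuousLinearMap.sum_apply] at h1
    simp only [ContinuousLinearMap.smul_apply, smul_eq_mul] at h1
    calc ∑ s', Complex.exp ((lam s' + 1) * t) * ((c s') • P s').eval (t : ℂ)
        = ∑ s', c s' * (f s') (dilate (Real.exp t) φ) := by
          refine Finset.sum_congr rfl fun s' _ => ?_
          rw [hPd s' _ ha, Real.log_exp, cpow_exp_eq, Polynomial.eval_smul, smul_eq_mul]
          ring
      _ = 0 := h1
  have hμ : Function.Injective fun s' => lam s' + 1 := fun a b hab => hlam (by simpa using hab)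
  have hz := expPolyIndep m _ hμ _ key s
  have h0 : c s * (f s) φ = 0 := by
    have hco := congrArg (fun Q => Polynomial.coeff Q 0) hz
    simpa [Polynomial.coeff_smul, hP0 s, smul_eq_mul] using hco
  have hfz : (f s) φ = 0 := (mul_eq_zero.mp h0).resolve_left hcs
  simpa using hfz


end
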